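/- In the ring $k[X_{11},X_{21},X_{31},X_{32},X_0,X_{32}',Y_{11},Y_{21},Y_{31},Y_{32},Y_0,Y_{32}',g_{ij}]$ localized at $g_{23}$, the ideal generated by the nine equations $g_{22}X_{32}'=g_{33}X_{32}$, $g_{22}X_0=g_{23}X_{32}$, $g_{33}X_0=g_{23}X_{32}'$, the analogous three for $Y$, together with $X_{21}Y_0=Y_{21}X_0$, $X_{32}Y_0=Y_{32}X_0$, $X_{21}Y_{32}=X_{32}Y_{21}$, equals the ideal generated by $X_{32}-g_{23}^{-1}g_{22}X_0$, $X_{32}'-g_{23}^{-1}g_{33}X_0$, $Y_{32}-g_{23}^{-1}g_{22}Y_0$, $Y_{32}'-g_{23}^{-1}g_{33}Y_0$, and $X_{21}Y_0-Y_{21}X_0$; in particular the quotient is reduced. -/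

import Mathlib

set_option maxHeartbeats 1000000
set_option synthInstance.maxHeartbeats 400000

open MvPolynomial
set_option maxHeartbeats 1000000
set_option synthInstance.maxHeartbeats 400000
-- divisor-of-linear lemma
theorem irr_linear {R : Type*} [CommRing R] [IsDomain R] {a b : R}
    (ha : Prime a) (hab : ¬ a ∣ b) :
    Irreducible (Polynomial.C a * Polynomial.X + Polynomial.C b) := by
  have hpne : (Polynomial.C a * Polynomial.X + Polynomial.C b) ≠ 0 := fun h => by
    have := Polynomial.natDegree_linear (b := b) ha.ne_zero
    rw [h, Polynomial.natDegree_zero] at this; exact one_ne_zero this.symm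
  have key : ∀ g : Polynomial R, g ∣ (Polynomial.C a * Polynomial.X + Polynomial.C b) →
      g.natDegree = 0 → IsUnit g := by
    intro g hg h0
    obtain ⟨c, rfl⟩ := Polynomial.natDegree_eq_zero.mp h0
    rw [Polynomial.C_dvd_iff_dvd_coeff] at hg
    have hca : c ∣ a := by simpa using hg 1
    have hcb : c ∣ b := by simpa using hg 0
    obtain ⟨d, hd⟩ := hca
    rcases ha.irreducible.isUnit_or_isUnit hd with h | h
    · exact Polynomial.isUnit_C.mpr h
    · exfalso
      have hassoc : Associated c a := by
        obtain ⟨u, rfl⟩ := h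
        exact ⟨u, hd.symm⟩
      exact hab (dvd_trans hassoc.symm.dvd hcb)
  constructor
  · intro hu
    have := Polynomial.natDegree_eq_zero_of_isUnit hu
    rw [Polynomial.natDegree_linear ha.ne_zero] at this
    exact one_ne_zero this
  · intro f g hfg
    have hf0 : f ≠ 0 := fun h => hpne (by rw [hfg, h, zero_mul])
    have hg0 : g ≠ 0 := fun h => hpne (by rw [hfg, h, mul_zero])
    have hd : f.natDegree + g.natDegree = 1 := by
      rw [← Polynomial.natDegree_mul hf0 hg0, ← hfg, Polynomial.natDegree_linear ha.ne_zero]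
    rcases Nat.add_eq_one_iff.mp hd with ⟨h1, _⟩ | ⟨_, h1⟩
    · exact Or.inl (key f ⟨g, hfg⟩ h1)
    · exact Or.inr (key g ⟨f, by rw [hfg, mul_comm]⟩ h1)

section PrimeQ
variable (k : Type*) [Field k]

theorem primeX0 : Prime (X (0 : Fin 20) : MvPolynomial (Fin 20) k) := by
  have hp : Prime ((finSuccEquiv k 19) (X (0 : Fin 20))) := by
    rw [finSuccEquiv_X_zero]; exact Polynomial.prime_X
  exact (MulEquiv.prime_iff (finSuccEquiv k 19)).mp hp

theorem notdvd : ¬ (X (0 : Fin 20) : MvPolynomial (Fin 20) k) ∣ (X 6 * X 3) := by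
  intro h
  rcases (primeX0 k).2.2 _ _ h with h' | h' <;>
  · obtain ⟨p, hp⟩ := h'
    have := congrArg (MvPolynomial.eval (fun i : Fin 20 => if i = 0 then (0:k) else 1)) hp
    simp at this

theorem prime_q : Prime (X 1 * X 10 - X 7 * X 4 : MvPolynomial (Fin 21) k) := by
  set e := (renameEquiv k (Equiv.swap (10 : Fin 21) 0)).trans (finSuccEquiv k 20) with he
  have hp : Prime (e (X 1 * X 10 - X 7 * X 4)) := by
    have heq : e (X 1 * X 10 - X 7 * X 4) =
        Polynomial.C (X 0) * Polynomial.X + Polynomial.C (-(X 6 * X 3)) := by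
      have h1 : (Equiv.swap (10 : Fin 21) 0) 1 = 1 := by decide
      have h10 : (Equiv.swap (10 : Fin 21) 0) 10 = 0 := by decide
      have h7 : (Equiv.swap (10 : Fin 21) 0) 7 = 7 := by decide
      have h4 : (Equiv.swap (10 : Fin 21) 0) 4 = 4 := by decide
      have e1 : ((1 : Fin 21)) = Fin.succ 0 := by decide
      have e7 : ((7 : Fin 21)) = Fin.succ 6 := by decide
      have e4 : ((4 : Fin 21)) = Fin.succ 3 := by decide
      rw [he]
      simp only [AlgEquiv.trans_apply, map_sub, map_mul, renameEquiv_apply, rename_X,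
        h1, h10, h7, h4]
      simp only [e1, e7, e4, finSuccEquiv_X_zero, finSuccEquiv_X_succ]
      simp only [map_neg, map_mul]
      ring
    rw [heq]
    exact (UniqueFactorizationMonoid.irreducible_iff_prime.mp
      (irr_linear (primeX0 k) (by rw [dvd_neg]; exact notdvd k)))
  exact (MulEquiv.prime_iff e).mp hp

end PrimeQ



namespace Stmt10

variable (k : Type*) [Field k]

/-- The polynomial ring `k[X₁₁,X₂₁,X₃₁,X₃₂,X₀,X₃₂',Y₁₁,Y₂₁,Y₃₁,Y₃₂,Y₀,Y₃₂',g_{ij}]`: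
variables `0,…,5` are `X₁₁,X₂₁,X₃₁,X₃₂,X₀,X₃₂'`, variables `6,…,11` are
`Y₁₁,Y₂₁,Y₃₁,Y₃₂,Y₀,Y₃₂'`, and variables `12,…,20` are `g₁₁,g₁₂,…,g₃₃` (row major). -/
abbrev P := MvPolynomial (Fin 21) k

noncomputable abbrev X21 : P k := X 1
noncomputable abbrev X32 : P k := X 3
noncomputable abbrev X0 : P k := X 4
noncomputable abbrev X32' : P k := X 5
noncomputable abbrev Y21 : P k := X 7
noncomputable abbrev Y32 : P k := X 9
noncomputable abbrev Y0 : P k := X 10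
noncomputable abbrev Y32' : P k := X 11
noncomputable abbrev g22 : P k := X 16
noncomputable abbrev g23 : P k := X 17
noncomputable abbrev g33 : P k := X 20

/-- The localization of the polynomial ring at `g₂₃`. -/
abbrev L := Localization.Away (g23 k)

noncomputable abbrev φ : P k →+* L k := algebraMap (P k) (L k)

/-- The inverse of `g₂₃` in the localization. -/
noncomputable abbrev g23inv : L k := IsLocalization.Away.invSelf (g23 k)

/-- the quadric -/
noncomputable abbrev qq : P k := X21 k * Y0 k - Y21 k * X0 k

noncomputable abbrev Iq : Ideal (P k) := Ideal.span {qq k}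

abbrev Dq := P k ⧸ Iq k

noncomputable abbrev g23D : Dq k := Ideal.Quotient.mk (Iq k) (g23 k)

abbrev B := Localization.Away (g23D k)

noncomputable abbrev cB : P k →+* B k :=
  (algebraMap (Dq k) (B k)).comp (Ideal.Quotient.mk (Iq k))

noncomputable abbrev tB : B k := IsLocalization.Away.invSelf (g23D k)

noncomputable def v : Fin 21 → B k := fun i =>
  if i = 3 then tB k * cB k (g22 k * X0 k)
  else if i = 5 then tB k * cB k (g33 k * X0 k)
  else if i = 9 then tB k * cB k (g22 k * Y0 k)
  else if i = 11 then tB k * cB k (g33 k * Y0 k)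
  else cB k (X i)

noncomputable def α : P k →+* B k :=
  MvPolynomial.eval₂Hom ((cB k).comp MvPolynomial.C) (v k)

lemma α_X (i : Fin 21) : α k (X i) = v k i := by
  simp [α]

lemma v_generic (i : Fin 21) (h3 : i ≠ 3) (h5 : i ≠ 5) (h9 : i ≠ 9) (h11 : i ≠ 11) :
    v k i = cB k (X i) := by
  simp [v, h3, h5, h9, h11]

lemma cB_qq : cB k (qq k) = 0 := by
  have hm : qq k ∈ Iq k := Ideal.subset_span rfl
  simp only [cB, RingHom.comp_apply]
  rw [Ideal.Quotient.eq_zero_iff_mem.mpr hm, map_zero]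

lemma α_g23_unit : IsUnit (α k (g23 k)) := by
  rw [α_X, v_generic k _ (by decide) (by decide) (by decide) (by decide)]
  exact IsLocalization.Away.algebraMap_isUnit (S := B k) (g23D k)

noncomputable def f₀ : L k →+* B k := IsLocalization.Away.lift (S := L k) (g := α k) (g23 k) (α_g23_unit k)

lemma f₀_φ (p : P k) : f₀ k (φ k p) = α k p := by
  unfold f₀
  exact IsLocalization.Away.lift_eq _ _ _

lemma cB_g23_tB : cB k (g23 k) * tB k = 1 := by
  show algebraMap (Dq k) (B k) (g23D k) * tB k = 1
  exact IsLocalization.Away.mul_invSelf (S := B k) (g23D k)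

lemma f₀_inv : f₀ k (g23inv k) = tB k := by
  have h1 : α k (g23 k) * f₀ k (g23inv k) = 1 := by
    rw [← f₀_φ, ← map_mul]
    have : φ k (g23 k) * g23inv k = 1 := IsLocalization.Away.mul_invSelf (S := L k) (g23 k)
    rw [this, map_one]
  have h2 : α k (g23 k) * tB k = 1 := by
    rw [α_X, v_generic k _ (by decide) (by decide) (by decide) (by decide)]
    exact cB_g23_tB k
  exact (α_g23_unit k).mul_left_cancel (h1.trans h2.symm)


noncomputable def Jgens : Set (L k) :=
  {φ k (X32 k) - g23inv k * φ k (g22 k * X0 k),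
   φ k (X32' k) - g23inv k * φ k (g33 k * X0 k),
   φ k (Y32 k) - g23inv k * φ k (g22 k * Y0 k),
   φ k (Y32' k) - g23inv k * φ k (g33 k * Y0 k),
   φ k (X21 k * Y0 k - Y21 k * X0 k)}

noncomputable def J : Ideal (L k) := Ideal.span (Jgens k)

lemma mem1 : φ k (X32 k) - g23inv k * φ k (g22 k * X0 k) ∈ J k :=
  Ideal.subset_span (Set.mem_insert _ _)
lemma mem2 : φ k (X32' k) - g23inv k * φ k (g33 k * X0 k) ∈ J k :=
  Ideal.subset_span (Set.mem_insert_of_mem _ (Set.mem_insert _ _))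
lemma mem3 : φ k (Y32 k) - g23inv k * φ k (g22 k * Y0 k) ∈ J k :=
  Ideal.subset_span (Set.mem_insert_of_mem _ (Set.mem_insert_of_mem _ (Set.mem_insert _ _)))
lemma mem4 : φ k (Y32' k) - g23inv k * φ k (g33 k * Y0 k) ∈ J k :=
  Ideal.subset_span (Set.mem_insert_of_mem _ (Set.mem_insert_of_mem _
    (Set.mem_insert_of_mem _ (Set.mem_insert _ _))))
lemma mem5 : φ k (X21 k * Y0 k - Y21 k * X0 k) ∈ J k :=
  Ideal.subset_span (Set.mem_insert_of_mem _ (Set.mem_insert_of_mem _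
    (Set.mem_insert_of_mem _ (Set.mem_insert_of_mem _ rfl))))

lemma f₀_ker : J k ≤ RingHom.ker (f₀ k) := by
  rw [J, Ideal.span_le]
  rintro x hx
  simp only [Jgens, Set.mem_insert_iff, Set.mem_singleton_iff] at hx
  have hv3 : v k 3 = tB k * cB k (g22 k * X0 k) := by simp [v]
  have hv5 : v k 5 = tB k * cB k (g33 k * X0 k) := by simp [v]
  have hv9 : v k 9 = tB k * cB k (g22 k * Y0 k) := by simp [v]
  have hv11 : v k 11 = tB k * cB k (g33 k * Y0 k) := by simp [v]
  have hgen : ∀ i : Fin 21, i ≠ 3 → i ≠ 5 → i ≠ 9 → i ≠ 11 → α k (X i) = cB k (X i) := by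
    intro i h3 h5 h9 h11
    rw [α_X, v_generic k i h3 h5 h9 h11]
  rcases hx with rfl | rfl | rfl | rfl | rfl <;>
  · show f₀ k _ = 0
    simp only [map_sub, map_mul, f₀_φ, f₀_inv, α_X,
      hv3, hv5, hv9, hv11,
      hgen 1 (by decide) (by decide) (by decide) (by decide),
      hgen 4 (by decide) (by decide) (by decide) (by decide),
      hgen 7 (by decide) (by decide) (by decide) (by decide),
      hgen 10 (by decide) (by decide) (by decide) (by decide),
      hgen 16 (by decide) (by decide) (by decide) (by decide),
      hgen 20 (by decide) (by decide) (by decide) (by decide)]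
    first
      | exact sub_self _
      | (rw [← map_mul, ← map_mul, ← map_sub]; exact cB_qq k)

noncomputable def fB : L k ⧸ J k →+* B k :=
  Ideal.Quotient.lift (J k) (f₀ k) (fun _ ha => f₀_ker k ha)

noncomputable def β : Dq k →+* L k ⧸ J k :=
  Ideal.Quotient.lift (Iq k) ((Ideal.Quotient.mk (J k)).comp (φ k)) (by
    have h : Iq k ≤ RingHom.ker ((Ideal.Quotient.mk (J k)).comp (φ k)) := by
      rw [Iq, Ideal.span_le, Set.singleton_subset_iff]
      show Ideal.Quotient.mk (J k) (φ k (qq k)) = 0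
      exact Ideal.Quotient.eq_zero_iff_mem.mpr (mem5 k)
    exact fun a ha => h ha)

lemma β_mk (p : P k) : β k (Ideal.Quotient.mk (Iq k) p) = Ideal.Quotient.mk (J k) (φ k p) := by
  simp [β]

lemma hβ : IsUnit (β k (g23D k)) := by
  apply IsUnit.of_mul_eq_one (Ideal.Quotient.mk (J k) (g23inv k))
  rw [β_mk, ← map_mul, IsLocalization.Away.mul_invSelf (S := L k) (g23 k), map_one]

noncomputable def gB : B k →+* L k ⧸ J k :=
  IsLocalization.Away.lift (S := B k) (g := β k) (g23D k) (hβ k)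

lemma gB_c (p : P k) : gB k (cB k p) = Ideal.Quotient.mk (J k) (φ k p) := by
  show gB k (algebraMap (Dq k) (B k) (Ideal.Quotient.mk (Iq k) p)) = _
  unfold gB
  rw [IsLocalization.Away.lift_eq, β_mk]

lemma gB_tB : gB k (tB k) = Ideal.Quotient.mk (J k) (g23inv k) := by
  have h1 : β k (g23D k) * gB k (tB k) = 1 := by
    have : gB k (cB k (g23 k) * tB k) = 1 := by rw [cB_g23_tB, map_one]
    rw [map_mul, gB_c, ← β_mk] at this
    exact this
  have h2 : β k (g23D k) * Ideal.Quotient.mk (J k) (g23inv k) = 1 := by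
    rw [β_mk, ← map_mul, IsLocalization.Away.mul_invSelf (S := L k) (g23 k), map_one]
  exact (hβ k).mul_left_cancel (h1.trans h2.symm)

lemma gf (a : L k) : gB k (f₀ k a) = Ideal.Quotient.mk (J k) a := by
  have h : (gB k).comp (f₀ k) = (Ideal.Quotient.mk (J k) : L k →+* L k ⧸ J k) := by
    apply IsLocalization.ringHom_ext (Submonoid.powers (g23 k))
    apply MvPolynomial.ringHom_ext
    · intro a
      show gB k (f₀ k (φ k (MvPolynomial.C a))) = Ideal.Quotient.mk (J k) (φ k (MvPolynomial.C a))
      have hC : α k (MvPolynomial.C a) = cB k (MvPolynomial.C a) := by simp [α]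
      rw [f₀_φ, hC, gB_c]
    · intro i
      show gB k (f₀ k (φ k (X i))) = Ideal.Quotient.mk (J k) (φ k (X i))
      rw [f₀_φ, α_X]
      by_cases h3 : i = 3
      · subst h3
        have hv3 : v k 3 = tB k * cB k (g22 k * X0 k) := by simp [v]
        rw [hv3, map_mul, gB_tB, gB_c, ← map_mul, Ideal.Quotient.mk_eq_mk_iff_sub_mem]
        have := (J k).neg_mem (mem1 k)
        simpa [neg_sub] using this
      by_cases h5 : i = 5
      · subst h5
        have hv5 : v k 5 = tB k * cB k (g33 k * X0 k) := by simp [v]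
        rw [hv5, map_mul, gB_tB, gB_c, ← map_mul, Ideal.Quotient.mk_eq_mk_iff_sub_mem]
        have := (J k).neg_mem (mem2 k)
        simpa [neg_sub] using this
      by_cases h9 : i = 9
      · subst h9
        have hv9 : v k 9 = tB k * cB k (g22 k * Y0 k) := by simp [v]
        rw [hv9, map_mul, gB_tB, gB_c, ← map_mul, Ideal.Quotient.mk_eq_mk_iff_sub_mem]
        have := (J k).neg_mem (mem3 k)
        simpa [neg_sub] using this
      by_cases h11 : i = 11
      · subst h11
        have hv11 : v k 11 = tB k * cB k (g33 k * Y0 k) := by simp [v]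
        rw [hv11, map_mul, gB_tB, gB_c, ← map_mul, Ideal.Quotient.mk_eq_mk_iff_sub_mem]
        have := (J k).neg_mem (mem4 k)
        simpa [neg_sub] using this
      · rw [v_generic k i h3 h5 h9 h11, gB_c]
  exact DFunLike.congr_fun h a

lemma fB_injective : Function.Injective (fB k) := by
  have : Function.LeftInverse (gB k) (fB k) := by
    intro x
    obtain ⟨a, rfl⟩ := Ideal.Quotient.mk_surjective x
    show gB k (f₀ k a) = _
    rw [gf]
  exact this.injective

lemma reduced_aux : IsReduced (L k ⧸ J k) := by
  have hprime : Prime (qq k) := prime_q k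
  have hIqprime : (Iq k).IsPrime := (Ideal.span_singleton_prime hprime.ne_zero).mpr hprime
  haveI : IsDomain (Dq k) := (Ideal.Quotient.isDomain_iff_prime (Iq k)).mpr hIqprime
  have hg23D : g23D k ≠ 0 := by
    intro h
    rw [Ideal.Quotient.eq_zero_iff_mem, Ideal.mem_span_singleton] at h
    obtain ⟨r, hr⟩ := h
    have := congrArg (MvPolynomial.eval (fun i : Fin 21 => if i = 17 then (1:k) else 0)) hr
    simp at this
  haveI : IsDomain (B k) := by
    apply IsLocalization.isDomain_localization (M := Submonoid.powers (g23D k))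
    apply le_nonZeroDivisors_of_noZeroDivisors
    rintro ⟨n, hn⟩
    exact pow_ne_zero n hg23D hn
  exact isReduced_of_injective (fB k) (fB_injective k)


lemma span_eq : (Ideal.span ({φ k (g22 k * X32' k - g33 k * X32 k),
                  φ k (g22 k * X0 k - g23 k * X32 k),
                  φ k (g33 k * X0 k - g23 k * X32' k),
                  φ k (g22 k * Y32' k - g33 k * Y32 k),
                  φ k (g22 k * Y0 k - g23 k * Y32 k),
                  φ k (g33 k * Y0 k - g23 k * Y32' k),
                  φ k (X21 k * Y0 k - Y21 k * X0 k),
                  φ k (X32 k * Y0 k - Y32 k * X0 k),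
                  φ k (X21 k * Y32 k - X32 k * Y21 k)} : Set (L k)) = J k) := by
  have hu : φ k (g23 k) * g23inv k = 1 := IsLocalization.Away.mul_invSelf (S := L k) (g23 k)
  apply le_antisymm
  · rw [Ideal.span_le]
    intro x hx
    simp only [Set.mem_insert_iff, Set.mem_singleton_iff] at hx
    rcases hx with rfl|rfl|rfl|rfl|rfl|rfl|rfl|rfl|rfl
    · show φ k (g22 k * X32' k - g33 k * X32 k) ∈ J k
      have h : φ k (g22 k * X32' k - g33 k * X32 k) =
          φ k (g22 k) * (φ k (X32' k) - g23inv k * φ k (g33 k * X0 k))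
          - φ k (g33 k) * (φ k (X32 k) - g23inv k * φ k (g22 k * X0 k)) := by
        simp only [map_sub, map_mul]; ring
      rw [h]
      exact sub_mem (Ideal.mul_mem_left _ _ (mem2 k)) (Ideal.mul_mem_left _ _ (mem1 k))
    · show φ k (g22 k * X0 k - g23 k * X32 k) ∈ J k
      have h : φ k (g22 k * X0 k - g23 k * X32 k) =
          (-(φ k (g23 k))) * (φ k (X32 k) - g23inv k * φ k (g22 k * X0 k)) := by
        simp only [map_sub, map_mul]
        linear_combination (-(φ k (g22 k) * φ k (X0 k))) * hu
      rw [h]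
      exact Ideal.mul_mem_left _ _ (mem1 k)
    · show φ k (g33 k * X0 k - g23 k * X32' k) ∈ J k
      have h : φ k (g33 k * X0 k - g23 k * X32' k) =
          (-(φ k (g23 k))) * (φ k (X32' k) - g23inv k * φ k (g33 k * X0 k)) := by
        simp only [map_sub, map_mul]
        linear_combination (-(φ k (g33 k) * φ k (X0 k))) * hu
      rw [h]
      exact Ideal.mul_mem_left _ _ (mem2 k)
    · show φ k (g22 k * Y32' k - g33 k * Y32 k) ∈ J k
      have h : φ k (g22 k * Y32' k - g33 k * Y32 k) =
          φ k (g22 k) * (φ k (Y32' k) - g23inv k * φ k (g33 k * Y0 k))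
          - φ k (g33 k) * (φ k (Y32 k) - g23inv k * φ k (g22 k * Y0 k)) := by
        simp only [map_sub, map_mul]; ring
      rw [h]
      exact sub_mem (Ideal.mul_mem_left _ _ (mem4 k)) (Ideal.mul_mem_left _ _ (mem3 k))
    · show φ k (g22 k * Y0 k - g23 k * Y32 k) ∈ J k
      have h : φ k (g22 k * Y0 k - g23 k * Y32 k) =
          (-(φ k (g23 k))) * (φ k (Y32 k) - g23inv k * φ k (g22 k * Y0 k)) := by
        simp only [map_sub, map_mul]
        linear_combination (-(φ k (g22 k) * φ k (Y0 k))) * hu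
      rw [h]
      exact Ideal.mul_mem_left _ _ (mem3 k)
    · show φ k (g33 k * Y0 k - g23 k * Y32' k) ∈ J k
      have h : φ k (g33 k * Y0 k - g23 k * Y32' k) =
          (-(φ k (g23 k))) * (φ k (Y32' k) - g23inv k * φ k (g33 k * Y0 k)) := by
        simp only [map_sub, map_mul]
        linear_combination (-(φ k (g33 k) * φ k (Y0 k))) * hu
      rw [h]
      exact Ideal.mul_mem_left _ _ (mem4 k)
    · exact mem5 k
    · show φ k (X32 k * Y0 k - Y32 k * X0 k) ∈ J k
      have h : φ k (X32 k * Y0 k - Y32 k * X0 k) =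
          φ k (Y0 k) * (φ k (X32 k) - g23inv k * φ k (g22 k * X0 k))
          - φ k (X0 k) * (φ k (Y32 k) - g23inv k * φ k (g22 k * Y0 k)) := by
        simp only [map_sub, map_mul]; ring
      rw [h]
      exact sub_mem (Ideal.mul_mem_left _ _ (mem1 k)) (Ideal.mul_mem_left _ _ (mem3 k))
    · show φ k (X21 k * Y32 k - X32 k * Y21 k) ∈ J k
      have h : φ k (X21 k * Y32 k - X32 k * Y21 k) =
          φ k (X21 k) * (φ k (Y32 k) - g23inv k * φ k (g22 k * Y0 k))
          - φ k (Y21 k) * (φ k (X32 k) - g23inv k * φ k (g22 k * X0 k))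
          + (g23inv k * φ k (g22 k)) * (φ k (X21 k * Y0 k - Y21 k * X0 k)) := by
        simp only [map_sub, map_mul]; ring
      rw [h]
      exact add_mem (sub_mem (Ideal.mul_mem_left _ _ (mem3 k))
        (Ideal.mul_mem_left _ _ (mem1 k))) (Ideal.mul_mem_left _ _ (mem5 k))
  · rw [J, Jgens, Ideal.span_le]
    intro x hx
    simp only [Set.mem_insert_iff, Set.mem_singleton_iff] at hx
    have m2 : φ k (g22 k * X0 k - g23 k * X32 k) ∈ Ideal.span
        ({φ k (g22 k * X32' k - g33 k * X32 k),
          φ k (g22 k * X0 k - g23 k * X32 k),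
          φ k (g33 k * X0 k - g23 k * X32' k),
          φ k (g22 k * Y32' k - g33 k * Y32 k),
          φ k (g22 k * Y0 k - g23 k * Y32 k),
          φ k (g33 k * Y0 k - g23 k * Y32' k),
          φ k (X21 k * Y0 k - Y21 k * X0 k),
          φ k (X32 k * Y0 k - Y32 k * X0 k),
          φ k (X21 k * Y32 k - X32 k * Y21 k)} : Set (L k)) :=
      Ideal.subset_span (Set.mem_insert_of_mem _ (Set.mem_insert _ _))
    have m3 : φ k (g33 k * X0 k - g23 k * X32' k) ∈ Ideal.span ({φ k (g22 k * X32' k - g33 k * X32 k),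
          φ k (g22 k * X0 k - g23 k * X32 k),
          φ k (g33 k * X0 k - g23 k * X32' k),
          φ k (g22 k * Y32' k - g33 k * Y32 k),
          φ k (g22 k * Y0 k - g23 k * Y32 k),
          φ k (g33 k * Y0 k - g23 k * Y32' k),
          φ k (X21 k * Y0 k - Y21 k * X0 k),
          φ k (X32 k * Y0 k - Y32 k * X0 k),
          φ k (X21 k * Y32 k - X32 k * Y21 k)} : Set (L k)) :=
      Ideal.subset_span (Set.mem_insert_of_mem _ (Set.mem_insert_of_mem _ (Set.mem_insert _ _)))
    have m5 : φ k (g22 k * Y0 k - g23 k * Y32 k) ∈ Ideal.span ({φ k (g22 k * X32' k - g33 k * X32 k),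
          φ k (g22 k * X0 k - g23 k * X32 k),
          φ k (g33 k * X0 k - g23 k * X32' k),
          φ k (g22 k * Y32' k - g33 k * Y32 k),
          φ k (g22 k * Y0 k - g23 k * Y32 k),
          φ k (g33 k * Y0 k - g23 k * Y32' k),
          φ k (X21 k * Y0 k - Y21 k * X0 k),
          φ k (X32 k * Y0 k - Y32 k * X0 k),
          φ k (X21 k * Y32 k - X32 k * Y21 k)} : Set (L k)) :=
      Ideal.subset_span (Set.mem_insert_of_mem _ (Set.mem_insert_of_mem _
        (Set.mem_insert_of_mem _ (Set.mem_insert_of_mem _ (Set.mem_insert _ _)))))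
    have m6 : φ k (g33 k * Y0 k - g23 k * Y32' k) ∈ Ideal.span ({φ k (g22 k * X32' k - g33 k * X32 k),
          φ k (g22 k * X0 k - g23 k * X32 k),
          φ k (g33 k * X0 k - g23 k * X32' k),
          φ k (g22 k * Y32' k - g33 k * Y32 k),
          φ k (g22 k * Y0 k - g23 k * Y32 k),
          φ k (g33 k * Y0 k - g23 k * Y32' k),
          φ k (X21 k * Y0 k - Y21 k * X0 k),
          φ k (X32 k * Y0 k - Y32 k * X0 k),
          φ k (X21 k * Y32 k - X32 k * Y21 k)} : Set (L k)) :=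
      Ideal.subset_span (Set.mem_insert_of_mem _ (Set.mem_insert_of_mem _
        (Set.mem_insert_of_mem _ (Set.mem_insert_of_mem _ (Set.mem_insert_of_mem _
          (Set.mem_insert _ _))))))
    have m7 : φ k (X21 k * Y0 k - Y21 k * X0 k) ∈ Ideal.span ({φ k (g22 k * X32' k - g33 k * X32 k),
          φ k (g22 k * X0 k - g23 k * X32 k),
          φ k (g33 k * X0 k - g23 k * X32' k),
          φ k (g22 k * Y32' k - g33 k * Y32 k),
          φ k (g22 k * Y0 k - g23 k * Y32 k),
          φ k (g33 k * Y0 k - g23 k * Y32' k),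
          φ k (X21 k * Y0 k - Y21 k * X0 k),
          φ k (X32 k * Y0 k - Y32 k * X0 k),
          φ k (X21 k * Y32 k - X32 k * Y21 k)} : Set (L k)) :=
      Ideal.subset_span (Set.mem_insert_of_mem _ (Set.mem_insert_of_mem _
        (Set.mem_insert_of_mem _ (Set.mem_insert_of_mem _ (Set.mem_insert_of_mem _
          (Set.mem_insert_of_mem _ (Set.mem_insert _ _)))))))
    rcases hx with rfl|rfl|rfl|rfl|rfl
    · have h : φ k (X32 k) - g23inv k * φ k (g22 k * X0 k) =
          (-(g23inv k)) * φ k (g22 k * X0 k - g23 k * X32 k) := by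
        simp only [map_sub, map_mul]
        linear_combination (-(φ k (X32 k))) * hu
      rw [h]
      exact Ideal.mul_mem_left _ _ m2
    · have h : φ k (X32' k) - g23inv k * φ k (g33 k * X0 k) =
          (-(g23inv k)) * φ k (g33 k * X0 k - g23 k * X32' k) := by
        simp only [map_sub, map_mul]
        linear_combination (-(φ k (X32' k))) * hu
      rw [h]
      exact Ideal.mul_mem_left _ _ m3
    · have h : φ k (Y32 k) - g23inv k * φ k (g22 k * Y0 k) =
          (-(g23inv k)) * φ k (g22 k * Y0 k - g23 k * Y32 k) := by
        simp only [map_sub, map_mul]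
        linear_combination (-(φ k (Y32 k))) * hu
      rw [h]
      exact Ideal.mul_mem_left _ _ m5
    · have h : φ k (Y32' k) - g23inv k * φ k (g33 k * Y0 k) =
          (-(g23inv k)) * φ k (g33 k * Y0 k - g23 k * Y32' k) := by
        simp only [map_sub, map_mul]
        linear_combination (-(φ k (Y32' k))) * hu
      rw [h]
      exact Ideal.mul_mem_left _ _ m6
    · exact m7


/-- In the localization at `g₂₃`, the ideal generated by the nine equations equals the
ideal generated by the four solved variables together with `X₂₁Y₀ - Y₂₁X₀`; in
particular the quotient is reduced. -/
theorem ideal_eq_and_reduced :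
    (Ideal.span ({φ k (g22 k * X32' k - g33 k * X32 k),
                  φ k (g22 k * X0 k - g23 k * X32 k),
                  φ k (g33 k * X0 k - g23 k * X32' k),
                  φ k (g22 k * Y32' k - g33 k * Y32 k),
                  φ k (g22 k * Y0 k - g23 k * Y32 k),
                  φ k (g33 k * Y0 k - g23 k * Y32' k),
                  φ k (X21 k * Y0 k - Y21 k * X0 k),
                  φ k (X32 k * Y0 k - Y32 k * X0 k),
                  φ k (X21 k * Y32 k - X32 k * Y21 k)} : Set (L k)) =
      Ideal.span ({φ k (X32 k) - g23inv k * φ k (g22 k * X0 k),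
                   φ k (X32' k) - g23inv k * φ k (g33 k * X0 k),
                   φ k (Y32 k) - g23inv k * φ k (g22 k * Y0 k),
                   φ k (Y32' k) - g23inv k * φ k (g33 k * Y0 k),
                   φ k (X21 k * Y0 k - Y21 k * X0 k)} : Set (L k))) ∧
    IsReduced (L k ⧸ Ideal.span ({φ k (g22 k * X32' k - g33 k * X32 k),
                  φ k (g22 k * X0 k - g23 k * X32 k),
                  φ k (g33 k * X0 k - g23 k * X32' k),
                  φ k (g22 k * Y32' k - g33 k * Y32 k),
                  φ k (g22 k * Y0 k - g23 k * Y32 k),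
                  φ k (g33 k * Y0 k - g23 k * Y32' k),
                  φ k (X21 k * Y0 k - Y21 k * X0 k),
                  φ k (X32 k * Y0 k - Y32 k * X0 k),
                  φ k (X21 k * Y32 k - X32 k * Y21 k)} : Set (L k))) := by
  refine ⟨?_, ?_⟩
  · have h := span_eq k
    rw [J, Jgens] at h
    exact h
  · rw [span_eq k]
    exact reduced_aux k


end Stmt10
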